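/- arXiv:2602.14938 — 2 statements merged into one kernel-verified Lean document; each statement's English description precedes it below -/
import Mathlib

section
/- Let L_r and L_f be differentiable functions on ℝ^d with L_r μ-strongly convex, and let θ* satisfy (1-r_f)∇L_r(θ*) + r_f·∇L_f(θ*) = 0 for r_f ∈ (0,1). Then the unique minimizer θ*_r of L_r satisfies ‖θ* - θ*_r‖ ≤ (r_f/(1-r_f))·‖∇L_f(θ*)‖/μ. -/
open RealInnerProductSpace

/-- data-dependent optima-distance bound using the forget-set
gradient norm at θ*. -/
theorem stmt3 {d : ℕ} (Lr Lf : EuclideanSpace ℝ (Fin d) → ℝ)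
    (gr gf : EuclideanSpace ℝ (Fin d) → EuclideanSpace ℝ (Fin d))
    (μ rf : ℝ) (hμ : 0 < μ) (hrf : rf ∈ Set.Ioo (0 : ℝ) 1)
    (hdr : ∀ x, HasGradientAt Lr (gr x) x)
    (hdf : ∀ x, HasGradientAt Lf (gf x) x)
    (hsc : ∀ x y, Lr y ≥ Lr x + ⟪gr x, y - x⟫ + μ / 2 * ‖y - x‖ ^ 2)
    (θs θsr : EuclideanSpace ℝ (Fin d))
    (hstat : (1 - rf) • gr θs + rf • gf θs = 0)
    (hminr : gr θsr = 0) (hmin : ∀ θ, Lr θsr ≤ Lr θ) :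
    ‖θs - θsr‖ ≤ rf / (1 - rf) * (‖gf θs‖ / μ) := by
  obtain ⟨hrf0, hrf1⟩ := hrf
  have h1rf : (0:ℝ) < 1 - rf := by linarith
  set v := θs - θsr with hv
  by_cases hv0 : v = 0
  · have : θs = θsr := by
      have := sub_eq_zero.mp hv0; exact this
    rw [hv, this, sub_self, norm_zero]
    positivity
  -- monotonicity from strong convexity
  have h1 := hsc θs θsr
  have h2 := hsc θsr θs
  rw [hminr] at h2
  simp only [inner_zero_left] at h2
  have hnorm : ‖θsr - θs‖ = ‖v‖ := by rw [hv, ← norm_neg]; rw [neg_sub]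
  have hkey : μ * ‖v‖ ^ 2 ≤ ⟪gr θs, v⟫ := by
    have hi : ⟪gr θs, θsr - θs⟫ = -⟪gr θs, v⟫ := by
      rw [hv, ← inner_neg_right, neg_sub]
    rw [hi, hnorm] at h1
    nlinarith [h1, h2]
  -- gr θs = -(rf/(1-rf)) • gf θs
  have hgr : gr θs = (-(rf/(1-rf))) • gf θs := by
    have heq : (1 - rf) • gr θs = -(rf • gf θs) := by
      have := hstat; rw [add_eq_zero_iff_eq_neg] at this; exact this
    have h := congrArg (fun z => (1-rf)⁻¹ • z) heq
    simp only [smul_smul, inv_mul_cancel₀ h1rf.ne', one_smul, smul_neg] at h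
    rw [h, ← neg_smul]
    congr 1
    field_simp
  have hgrnorm : ‖gr θs‖ = rf / (1 - rf) * ‖gf θs‖ := by
    rw [hgr, norm_smul]
    rw [Real.norm_eq_abs, abs_neg, abs_of_pos (by positivity)]
  have hcs : ⟪gr θs, v⟫ ≤ ‖gr θs‖ * ‖v‖ := real_inner_le_norm _ _
  have hvpos : 0 < ‖v‖ := norm_pos_iff.mpr hv0
  have : μ * ‖v‖ ≤ ‖gr θs‖ := by
    have := hkey.trans hcs
    nlinarith
  rw [hgrnorm] at this
  have : ‖v‖ ≤ rf / (1 - rf) * ‖gf θs‖ / μ := by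
    rw [le_div_iff₀ hμ]; nlinarith
  calc ‖v‖ ≤ rf / (1 - rf) * ‖gf θs‖ / μ := this
    _ = rf / (1 - rf) * (‖gf θs‖ / μ) := by ring
end

section
/- Let a recursion d_{t+1} ≤ (1 - 2/t)·d_t + G²/(μ²·t²) hold for t ≥ 2, with d_t ≥ 0. Then for all T ≥ 2, d_T ≤ max(d_2·4/T², 0) + G²/(μ²·T)·C for an absolute constant C, in particular d_T = O(G²/(μ²·T)). -/
lemma stmt19_key (x A g : ℝ) (hx : 2 ≤ x) (hA : 0 ≤ A) (hg : 0 ≤ g) :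
    (1 - 2/x) * (A * 4 / x^2 + g/x) + g/x^2 ≤ A * 4 / (x+1)^2 + g/(x+1) := by
  have hx0 : 0 < x := by linarith
  have h1 : 0 < x + 1 := by linarith
  have hxne := hx0.ne'
  have h1ne := h1.ne'
  have lhs_eq : (1 - 2/x) * (A * 4 / x^2 + g/x) + g/x^2
      = ((x-2)*(A*4 + g*x) + g*x) / (x^2*x) := by
    field_simp
  have rhs_eq : A * 4 / (x+1)^2 + g/(x+1) = (A*4 + g*(x+1)) / ((x+1)^2) := by
    field_simp
  rw [lhs_eq, rhs_eq, div_le_div_iff₀ (by positivity) (by positivity)]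
  nlinarith [mul_nonneg hA hx0.le, mul_nonneg hg hx0.le, sq_nonneg x,
    mul_nonneg (mul_nonneg hg hx0.le) hx0.le]

/-- the deterministic SGD recursion d_{t+1} ≤ (1-2/t)d_t + G²/(μ²t²)
implies d_T ≤ 4·d_2/T² + C·G²/(μ²T) for an absolute constant C. -/
theorem stmt19 :
    ∃ C > (0 : ℝ), ∀ (d : ℕ → ℝ) (G μ : ℝ), 0 < μ →
      (∀ t, 0 ≤ d t) →
      (∀ t : ℕ, 2 ≤ t →
        d (t + 1) ≤ (1 - 2 / (t : ℝ)) * d t + G ^ 2 / (μ ^ 2 * (t : ℝ) ^ 2)) →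
      ∀ T : ℕ, 2 ≤ T →
        d T ≤ max (d 2 * 4 / (T : ℝ) ^ 2) 0 + C * G ^ 2 / (μ ^ 2 * T) := by
  refine ⟨1, one_pos, ?_⟩
  intro d G μ hμ hd hrec T hT
  set g : ℝ := G ^ 2 / μ ^ 2 with hgdef
  have hg : 0 ≤ g := by positivity
  have key : ∀ T : ℕ, 2 ≤ T → d T ≤ d 2 * 4 / (T : ℝ) ^ 2 + g / T := by
    intro T hT
    induction T, hT using Nat.le_induction with
    | base =>
      have : (0:ℝ) ≤ g / 2 := by positivity
      norm_num
      linarith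
    | succ t ht ih =>
      have ht0 : (0:ℝ) < t := by exact_mod_cast Nat.lt_of_lt_of_le two_pos ht
      have ht2 : (2:ℝ) ≤ t := by exact_mod_cast ht
      have hfac : (0:ℝ) ≤ 1 - 2 / t := by
        rw [sub_nonneg, div_le_one ht0]; linarith
      have hrec' := hrec t ht
      have hgt2 : G ^ 2 / (μ ^ 2 * (t:ℝ) ^ 2) = g / (t:ℝ)^2 := by
        rw [hgdef, div_div]
      have step : d (t+1) ≤ (1 - 2/(t:ℝ)) * (d 2 * 4 / (t:ℝ)^2 + g/t) + g/(t:ℝ)^2 := by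
        rw [hgt2] at hrec'
        exact hrec'.trans (by nlinarith [mul_le_mul_of_nonneg_left ih hfac])
      have := step.trans (stmt19_key t (d 2) g ht2 (hd 2) hg)
      push_cast
      convert this using 2
  have h := key T hT
  have hT0 : (0:ℝ) < T := by exact_mod_cast Nat.lt_of_lt_of_le two_pos hT
  have hmax : d 2 * 4 / (T:ℝ)^2 ≤ max (d 2 * 4 / (T : ℝ) ^ 2) 0 := le_max_left _ _
  have : 1 * G ^ 2 / (μ ^ 2 * T) = g / T := by rw [hgdef, one_mul, div_div]
  rw [this]
  linarith
end
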